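/- Let u : [θ,1] → ℝ be defined by u(v) = √(3v·c₁/m) + √(2(v + √(3v·c₁/m))·c₂/m) + 2c₂/m for positive constants c₁, c₂, m, θ with θ ≤ 1. If u(θ) ≤ ε·θ for some ε > 0, then u(v) ≤ ε·v for all v ∈ [θ, 1]. -/

import Mathlib

theorem stmt_15 (c₁ c₂ m θ ε : ℝ)
    (hc₁ : 0 < c₁) (hc₂ : 0 < c₂) (hm : 0 < m) (hθ0 : 0 < θ) (hθ1 : θ ≤ 1) (hε : 0 < ε)
    (u : ℝ → ℝ)
    (hu : ∀ v, u v = Real.sqrt (3 * v * c₁ / m)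
        + Real.sqrt (2 * (v + Real.sqrt (3 * v * c₁ / m)) * c₂ / m) + 2 * c₂ / m)
    (hθ : u θ ≤ ε * θ) :
    ∀ v, θ ≤ v → v ≤ 1 → u v ≤ ε * v := by
  intro v hv1 hv2
  have hv0 : 0 < v := lt_of_lt_of_le hθ0 hv1
  set t : ℝ := v / θ with hts
  have ht1 : 1 ≤ t := (one_le_div hθ0).mpr hv1
  have ht0 : (0:ℝ) ≤ t := le_trans zero_le_one ht1
  have hst : Real.sqrt t ≤ t := by
    nlinarith [Real.sq_sqrt ht0, Real.sqrt_nonneg t, Real.sqrt_le_sqrt ht1,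
      Real.sqrt_one]
  have hst0 : 0 ≤ Real.sqrt t := Real.sqrt_nonneg t
  have hvt : v = t * θ := by rw [hts, div_mul_cancel₀ v hθ0.ne']
  set a : ℝ := Real.sqrt (3 * θ * c₁ / m) with ha
  have ha0 : 0 ≤ a := Real.sqrt_nonneg _
  have eq1 : Real.sqrt (3 * v * c₁ / m) = Real.sqrt t * a := by
    rw [hvt, show 3 * (t * θ) * c₁ / m = t * (3 * θ * c₁ / m) by ring,
      Real.sqrt_mul ht0]
  set b : ℝ := Real.sqrt (2 * (θ + a) * c₂ / m) with hb
  have hb0 : 0 ≤ b := Real.sqrt_nonneg _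
  have hinner : 2 * (v + Real.sqrt (3 * v * c₁ / m)) * c₂ / m
      ≤ t * (2 * (θ + a) * c₂ / m) := by
    rw [eq1, hvt, show t * (2 * (θ + a) * c₂ / m) = t * (2 * (θ + a) * c₂) / m by ring]
    have h1 : Real.sqrt t * a ≤ t * a := mul_le_mul_of_nonneg_right hst ha0
    apply (div_le_div_iff_of_pos_right hm).mpr
    nlinarith [mul_le_mul_of_nonneg_right h1 (le_of_lt hc₂), hθ0.le]
  have eq2 : Real.sqrt (t * (2 * (θ + a) * c₂ / m)) = Real.sqrt t * b := by
    rw [Real.sqrt_mul ht0]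
  have h2 : Real.sqrt (2 * (v + Real.sqrt (3 * v * c₁ / m)) * c₂ / m)
      ≤ Real.sqrt t * b := by
    rw [← eq2]; exact Real.sqrt_le_sqrt hinner
  have huv : u v ≤ t * u θ := by
    rw [hu v, hu θ, ← ha, ← hb]
    have h1 : Real.sqrt (3 * v * c₁ / m) ≤ t * a := by
      rw [eq1]; exact mul_le_mul_of_nonneg_right hst ha0
    have h2' : Real.sqrt (2 * (v + Real.sqrt (3 * v * c₁ / m)) * c₂ / m) ≤ t * b :=
      le_trans h2 (mul_le_mul_of_nonneg_right hst hb0)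
    have h3 : 2 * c₂ / m ≤ t * (2 * c₂ / m) := by
      nlinarith [div_pos (by linarith : (0:ℝ) < 2 * c₂) hm]
    nlinarith [h1, h2', h3]
  calc u v ≤ t * u θ := huv
    _ ≤ t * (ε * θ) := by
        exact mul_le_mul_of_nonneg_left hθ ht0
    _ = ε * v := by rw [hvt]; ring
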